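/- For integers n ≥ k ≥ 1 with n ≥ 2: (1/n!) · Σ over pairs (T, c) of a labelled tree T on n vertices and an injective tuple c of k distinct vertices, of ∏_{i=1}^n (d_i(T) + 1_{i∈c} - 1)!, equals binomial(2n-1, n-k) · binomial(2n+k-3, 2n-1) · (k-2)!, where for k=1 the expression (k-2)! is interpreted via the identity ((n-2)!/(n-k)!)·binomial(2n+k-3, n-2) with k=1. -/

import Mathlib

open Finset

/-- Hockey stick. -/
lemma hs (r m : ℕ) : ∑ v ∈ range (m+1), (v + r).choose r = (m + r + 1).choose (r + 1) := by
  induction m with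
  | zero => simp
  | succ m ih =>
    rw [sum_range_succ, ih, show m + 1 + r + 1 = (m + r + 1) + 1 from by ring,
      Nat.choose_succ_succ, show m + 1 + r = m + r + 1 from by ring]
    exact Nat.add_comm _ _

lemma hs2 (r m : ℕ) : ∑ u ∈ range (m+1), (u + 1) * ((m - u) + r).choose r
    = (m + r + 2).choose (r + 2) := by
  have key : ∑ u ∈ range (m+1), (u + 1) * ((m - u) + r).choose r
      = ∑ t ∈ range (m+1), ∑ w ∈ range (m - t + 1), ((m - (m - w)) + r).choose r := by
    have l1 : ∀ u ∈ range (m+1), (u + 1) * ((m - u) + r).choose r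
        = ∑ t ∈ range (u+1), ((m - u) + r).choose r := by
      intro u _; rw [Finset.sum_const, card_range, smul_eq_mul]
    rw [Finset.sum_congr rfl l1, sum_sigma', sum_sigma']
    apply Finset.sum_nbij' (i := fun p => ⟨p.2, m - p.1⟩) (j := fun p => ⟨m - p.2, p.1⟩)
    · rintro ⟨u, t⟩ h; simp only [mem_sigma, mem_range] at h ⊢; omega
    · rintro ⟨t, w⟩ h; simp only [mem_sigma, mem_range] at h ⊢; omega
    · rintro ⟨u, t⟩ h; simp only [mem_sigma, mem_range] at h
      have : m - (m - u) = u := by omega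
      simp only [this]
    · rintro ⟨t, w⟩ h; simp only [mem_sigma, mem_range] at h
      have : m - (m - w) = w := by omega
      simp only [this]
    · rintro ⟨u, t⟩ h; simp only [mem_sigma, mem_range] at h
      simp only []; congr 2; omega
  rw [key]
  have l2 : ∀ t ∈ range (m+1), ∑ w ∈ range (m - t + 1), ((m - (m - w)) + r).choose r
      = ((m - t) + (r + 1)).choose (r + 1) := by
    intro t ht
    rw [mem_range] at ht
    have : ∀ w ∈ range (m - t + 1), ((m - (m - w)) + r).choose r = (w + r).choose r := by
      intro w hw; rw [mem_range] at hw; congr 2; omega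
    rw [Finset.sum_congr rfl this, hs, Nat.add_assoc]
  rw [Finset.sum_congr rfl l2]
  have := Finset.sum_range_reflect (fun w => (w + (r+1)).choose (r+1)) (m+1)
  simp only [Nat.add_sub_cancel, Nat.succ_sub_succ_eq_sub, Nat.sub_zero] at this
  rw [this, hs (r+1) m]
  congr 1 <;> omega

lemma tuple_decomp (j m : ℕ) (F : (Fin (j+1) → ℕ) → ℕ) :
    ∑ e ∈ Finset.Nat.antidiagonalTuple (j+1) m, F e
      = ∑ a ∈ range (m+1), ∑ e' ∈ Finset.Nat.antidiagonalTuple j (m - a), F (Fin.cons a e') := by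
  rw [sum_sigma']
  apply Finset.sum_nbij' (i := fun e => (⟨e 0, Fin.tail e⟩ : (_ : ℕ) × (Fin j → ℕ)))
      (j := fun p => Fin.cons p.1 p.2)
  · intro e he
    rw [Finset.Nat.mem_antidiagonalTuple] at he
    rw [Fin.sum_univ_succ] at he
    simp only [mem_sigma, mem_range, Finset.Nat.mem_antidiagonalTuple]
    constructor
    · omega
    · have : ∑ i : Fin j, Fin.tail e i = ∑ i : Fin j, e i.succ := rfl
      omega
  · rintro ⟨a, e'⟩ h
    simp only [mem_sigma, mem_range, Finset.Nat.mem_antidiagonalTuple] at h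
    rw [Finset.Nat.mem_antidiagonalTuple, Fin.sum_univ_succ]
    simp only [Fin.cons_zero, Fin.cons_succ]
    omega
  · intro e he; exact Fin.cons_self_tail e
  · rintro ⟨a, e'⟩ h
    simp only [Fin.cons_zero, Fin.tail_cons]
  · intro e he
    rw [Fin.cons_self_tail]

lemma tupleSum : ∀ j, 1 ≤ j → ∀ (m : ℕ) (P : Fin j → Prop) (_ : DecidablePred P),
    (∑ e ∈ Finset.Nat.antidiagonalTuple j m, ∏ i, (if P i then e i + 1 else 1))
      = (m + j + (univ.filter P).card - 1).choose m := by
  refine Nat.le_induction ?_ ?_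
  · intro m P hdec
    rw [Finset.Nat.antidiagonalTuple_one, Finset.sum_singleton, Fin.prod_univ_one]
    by_cases h : P 0
    · have hf : univ.filter P = univ := by
        apply Finset.filter_eq_self.mpr
        intro x _
        have : x = 0 := Subsingleton.elim x 0
        rwa [this]
      rw [if_pos h, hf]
      simp [Nat.choose_succ_self_right]
    · have hf : univ.filter P = ∅ := by
        apply Finset.filter_eq_empty_iff.mpr
        intro x _
        have : x = 0 := Subsingleton.elim x 0
        rwa [this]
      rw [if_neg h, hf]
      simp
  · intro j hj ih m P hdec
    rw [tuple_decomp]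
    have hinner : ∀ a ∈ range (m+1),
        ∑ e' ∈ Finset.Nat.antidiagonalTuple j (m - a), ∏ i, (if P i then Fin.cons a e' i + 1 else 1)
          = (if P 0 then a + 1 else 1) *
            ((m - a) + j + (univ.filter (fun i : Fin j => P i.succ)).card - 1).choose (m - a) := by
      intro a _
      have : ∀ e' : Fin j → ℕ, (∏ i, (if P i then Fin.cons a e' i + 1 else 1))
          = (if P 0 then a + 1 else 1) * ∏ i, (if P i.succ then e' i + 1 else 1) := by
        intro e'
        rw [Fin.prod_univ_succ, Fin.cons_zero]
        simp only [Fin.cons_succ]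
      rw [Finset.sum_congr rfl (fun e' _ => this e'), ← Finset.mul_sum,
        ih (m - a) (fun i => P i.succ) (fun i => hdec i.succ)]
    rw [Finset.sum_congr rfl hinner]
    set K' := (univ.filter (fun i : Fin j => P i.succ)).card with hK'
    have hKcard : (univ.filter P).card = (if P 0 then 1 else 0) + K' := by
      simp only [hK', Finset.card_filter]
      rw [Fin.sum_univ_succ]
    have hK'le : K' ≤ j := by
      apply le_trans (Finset.card_filter_le _ _)
      simp
    set r := j + K' - 1 with hr
    have hr1 : r + 1 = j + K' := by omega
    have hterm : ∀ a ∈ range (m+1),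
        ((m - a) + j + K' - 1).choose (m - a) = ((m - a) + r).choose r := by
      intro a _
      have h1 : (m - a) + j + K' - 1 = (m - a) + r := by omega
      rw [h1]
      rw [← Nat.choose_symm (by omega : r ≤ (m - a) + r)]
      congr 1
      omega
    by_cases h0 : P 0
    · simp only [if_pos h0]
      have : ∀ a ∈ range (m+1),
          (a + 1) * ((m - a) + j + K' - 1).choose (m - a) = (a+1) * ((m - a) + r).choose r := by
        intro a ha; rw [hterm a ha]
      rw [Finset.sum_congr rfl this, hs2 r m, hKcard, if_pos h0,
        ← Nat.choose_symm (by omega : r + 2 ≤ m + r + 2)]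
      congr 1 <;> omega
    · simp only [if_neg h0, one_mul]
      rw [Finset.sum_congr rfl hterm]
      have := Finset.sum_range_reflect (fun a => (a + r).choose r) (m+1)
      simp only [Nat.add_sub_cancel, Nat.succ_sub_succ_eq_sub, Nat.sub_zero] at this
      rw [this, hs r m, hKcard, if_neg h0, Nat.zero_add,
        ← Nat.choose_symm (by omega : r + 1 ≤ m + r + 1)]
      congr 1 <;> omega


open SimpleGraph
open scoped Classical

variable {V W : Type*}

lemma cycle_two_nbrs {G : SimpleGraph V} {u x : V} (c : G.Walk u u) (hc : c.IsCycle)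
    (hx : x ∈ c.support) : ∃ a b, a ≠ b ∧ G.Adj x a ∧ G.Adj x b := by
  have hc' := hc.rotate hx
  set c' := c.rotate x hx with hcdef
  have hn := hc'.not_nil
  rw [SimpleGraph.Walk.not_nil_iff] at hn
  obtain ⟨y, hadj, q, hq⟩ := hn
  rw [hq, SimpleGraph.Walk.cons_isCycle_iff] at hc'
  obtain ⟨hqpath, hedge⟩ := hc'
  have hqn : ¬ q.Nil := SimpleGraph.Walk.not_nil_of_ne (hadj.ne.symm)
  have hqrn : ¬ q.reverse.Nil := SimpleGraph.Walk.not_nil_of_ne (hadj.ne)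
  rw [SimpleGraph.Walk.not_nil_iff] at hqrn
  obtain ⟨b, hadj2, q2, hq2⟩ := hqrn
  refine ⟨y, b, ?_, hadj, hadj2⟩
  rintro rfl
  apply hedge
  have : s(x, y) ∈ q.reverse.edges := by
    rw [hq2, SimpleGraph.Walk.edges_cons]
    exact List.mem_cons_self
  rwa [SimpleGraph.Walk.edges_reverse, List.mem_reverse] at this

lemma path_internal_two_nbrs {G : SimpleGraph V} {u v x : V} (p : G.Walk u v)
    (hp : p.IsPath) (hx : x ∈ p.support) (hxu : x ≠ u) (hxv : x ≠ v) :
    ∃ a b, a ≠ b ∧ G.Adj x a ∧ G.Adj x b := by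
  induction p with
  | nil => simp only [SimpleGraph.Walk.support_nil, List.mem_singleton] at hx; exact absurd hx hxu
  | @cons u w v hadj q ih =>
    rw [SimpleGraph.Walk.support_cons] at hx
    rcases List.mem_cons.mp hx with h | h
    · exact absurd h hxu
    · by_cases hxw : x = w
      · subst hxw
        have hqn : ¬ q.Nil := SimpleGraph.Walk.not_nil_of_ne hxv
        rw [SimpleGraph.Walk.not_nil_iff] at hqn
        obtain ⟨b, hadj2, q2, hq2⟩ := hqn
        rw [SimpleGraph.Walk.cons_isPath_iff] at hp
        refine ⟨u, b, ?_, hadj.symm, hadj2⟩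
        rintro rfl
        apply hp.2
        rw [hq2, SimpleGraph.Walk.support_cons]
        exact List.mem_cons_of_mem _ (SimpleGraph.Walk.start_mem_support q2)
      · exact ih hp.of_cons h hxw hxv

/-- The homomorphism from `G` to `G.map f`. -/
def mapUpHom (G : SimpleGraph V) (f : V ↪ W) : G →g G.map f :=
  ⟨f, fun h => ⟨f.injective.ne h.ne, _, _, h, rfl, rfl⟩⟩

lemma map_walk_pullback {G : SimpleGraph V} (f : V ↪ W) {u' v' : W}
    (p : (G.map f).Walk u' v') : ∀ (a b : V) (ha : f a = u') (hb : f b = v'),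
    ∃ q : G.Walk a b, p.copy ha.symm hb.symm = q.map (mapUpHom G f) := by
  induction p with
  | nil =>
    intro a b ha hb
    obtain rfl : a = b := f.injective (ha.trans hb.symm)
    subst ha
    exact ⟨SimpleGraph.Walk.nil, by simp; rfl⟩
  | @cons u' w' v' hadj p ih =>
    intro a b ha hb
    obtain ⟨-, a₀, b₀, h₀, ha₀, hb₀⟩ := hadj
    obtain rfl : a₀ = a := f.injective (ha₀.trans ha.symm)
    subst ha₀
    subst hb₀
    obtain ⟨q₂, hq₂⟩ := ih b₀ b rfl hb
    refine ⟨SimpleGraph.Walk.cons h₀ q₂, ?_⟩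
    rw [SimpleGraph.Walk.map_cons, ← hq₂]
    subst hb
    rfl

lemma acyclic_map {G : SimpleGraph V} (f : V ↪ W) (hG : G.IsAcyclic) :
    (G.map f).IsAcyclic := by
  intro u c hc
  have hn := hc.not_nil
  rw [SimpleGraph.Walk.not_nil_iff] at hn
  obtain ⟨w, hadj, q, hq⟩ := hn
  obtain ⟨-, a₀, b₀, h₀, ha₀, hb₀⟩ := hadj
  obtain ⟨q', hq'⟩ := map_walk_pullback f c a₀ a₀ ha₀ ha₀
  have : (c.copy ha₀.symm ha₀.symm).IsCycle := by
    rwa [SimpleGraph.Walk.isCycle_copy]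
  rw [hq'] at this
  have : q'.IsCycle := by
    exact (SimpleGraph.Walk.map_isCycle_iff_of_injective (f := mapUpHom G f) f.injective).mp this
  exact hG q' this

/-- The homomorphism from `G.comap f` to `G`. -/
def comapDownHom (G : SimpleGraph W) (f : V ↪ W) : G.comap f →g G :=
  ⟨f, fun h => h⟩

lemma acyclic_comap {G : SimpleGraph W} (f : V ↪ W) (hG : G.IsAcyclic) :
    (G.comap f).IsAcyclic := by
  intro u c hc
  exact hG _ (hc.map (f := comapDownHom G f) f.injective)

variable {n : ℕ}

/-- Attach a new pendant vertex `Fin.last n` to vertex `j.castSucc`. -/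
def upG (G : SimpleGraph (Fin n)) (j : Fin n) : SimpleGraph (Fin (n+1)) :=
  (G.map Fin.castSuccEmb) ⊔ SimpleGraph.edge (Fin.last n) j.castSucc

/-- Delete the vertex `Fin.last n`. -/
def downG (G : SimpleGraph (Fin (n+1))) : SimpleGraph (Fin n) :=
  G.comap Fin.castSucc

lemma upG_adj {G : SimpleGraph (Fin n)} {j : Fin n} {x y : Fin (n+1)} :
    (upG G j).Adj x y ↔ (∃ a b, G.Adj a b ∧ a.castSucc = x ∧ b.castSucc = y) ∨
      (x = Fin.last n ∧ y = j.castSucc) ∨ (y = Fin.last n ∧ x = j.castSucc) := by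
  have hne : Fin.last n ≠ j.castSucc := (Fin.castSucc_lt_last j).ne'
  constructor
  · rintro (h | h)
    · obtain ⟨-, a, b, hab, ha, hb⟩ := h
      exact Or.inl ⟨a, b, hab, ha, hb⟩
    · rw [SimpleGraph.edge_adj] at h
      rcases h.1 with ⟨rfl, rfl⟩ | ⟨rfl, rfl⟩
      · exact Or.inr (Or.inl ⟨rfl, rfl⟩)
      · exact Or.inr (Or.inr ⟨rfl, rfl⟩)
  · rintro (⟨a, b, hab, ha, hb⟩ | ⟨rfl, rfl⟩ | ⟨rfl, rfl⟩)
    · exact Or.inl ⟨by rw [← ha, ← hb]; exact (Fin.castSucc_injective n).ne hab.ne, a, b, hab, ha, hb⟩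
    · exact Or.inr (by rw [SimpleGraph.edge_adj]; exact ⟨Or.inl ⟨rfl, rfl⟩, hne⟩)
    · exact Or.inr (by rw [SimpleGraph.edge_adj]; exact ⟨Or.inr ⟨rfl, rfl⟩, hne.symm⟩)

lemma upG_adj_last {G : SimpleGraph (Fin n)} {j : Fin n} {x : Fin (n+1)} :
    (upG G j).Adj (Fin.last n) x ↔ x = j.castSucc := by
  rw [upG_adj]
  constructor
  · rintro (⟨a, b, hab, ha, hb⟩ | ⟨_, rfl⟩ | ⟨hx, h2⟩)
    · exact absurd ha (Fin.castSucc_lt_last a).ne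
    · rfl
    · exact absurd h2 (Fin.castSucc_lt_last j).ne'
  · rintro rfl
    exact Or.inr (Or.inl ⟨rfl, rfl⟩)

lemma upG_nbhd_last {G : SimpleGraph (Fin n)} {j : Fin n} :
    (upG G j).neighborSet (Fin.last n) = {j.castSucc} := by
  ext x
  simp only [SimpleGraph.mem_neighborSet, upG_adj_last, Set.mem_singleton_iff]

lemma upG_adj_cast {G : SimpleGraph (Fin n)} {j : Fin n} {i : Fin n} {x : Fin (n+1)} :
    (upG G j).Adj i.castSucc x ↔ (∃ b, G.Adj i b ∧ b.castSucc = x) ∨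
      (i = j ∧ x = Fin.last n) := by
  rw [upG_adj]
  constructor
  · rintro (⟨a, b, hab, ha, hb⟩ | ⟨hx, rfl⟩ | ⟨rfl, hx⟩)
    · obtain rfl : a = i := Fin.castSucc_injective n ha
      exact Or.inl ⟨b, hab, hb⟩
    · exact absurd hx (Fin.castSucc_lt_last i).ne
    · obtain rfl : i = j := Fin.castSucc_injective n hx
      exact Or.inr ⟨rfl, rfl⟩
  · rintro (⟨b, hab, hb⟩ | ⟨rfl, rfl⟩)
    · exact Or.inl ⟨i, b, hab, rfl, hb⟩
    · exact Or.inr (Or.inr ⟨rfl, rfl⟩)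

lemma upG_nbhd_cast {G : SimpleGraph (Fin n)} {j : Fin n} {i : Fin n} :
    (upG G j).neighborSet i.castSucc =
      Fin.castSucc '' (G.neighborSet i) ∪ (if i = j then {Fin.last n} else ∅) := by
  ext x
  simp only [SimpleGraph.mem_neighborSet, upG_adj_cast, Set.mem_union, Set.mem_image]
  constructor
  · rintro (⟨b, hab, hb⟩ | ⟨rfl, rfl⟩)
    · exact Or.inl ⟨b, hab, hb⟩
    · right; rw [if_pos rfl]; rfl
  · rintro (⟨b, hab, hb⟩ | hmem)
    · exact Or.inl ⟨b, hab, hb⟩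
    · split_ifs at hmem with h
      · exact Or.inr ⟨h, hmem⟩
      · exact absurd hmem (Set.notMem_empty x)

lemma upG_deg_last {G : SimpleGraph (Fin n)} {j : Fin n} :
    ((upG G j).neighborSet (Fin.last n)).ncard = 1 := by
  rw [upG_nbhd_last, Set.ncard_singleton]

lemma upG_deg_cast {G : SimpleGraph (Fin n)} {j : Fin n} (i : Fin n) :
    ((upG G j).neighborSet i.castSucc).ncard =
      (G.neighborSet i).ncard + (if i = j then 1 else 0) := by
  rw [upG_nbhd_cast]
  split_ifs with h
  · rw [Set.ncard_union_eq ?_ (Set.toFinite _) (Set.toFinite _)]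
    · rw [Set.ncard_image_of_injective _ (Fin.castSucc_injective n), Set.ncard_singleton]
    · rw [Set.disjoint_singleton_right]
      rintro ⟨b, _, hb⟩
      exact (Fin.castSucc_lt_last b).ne hb
  · rw [Set.union_empty, Set.ncard_image_of_injective _ (Fin.castSucc_injective n), Nat.add_zero]

lemma downG_upG {G : SimpleGraph (Fin n)} {j : Fin n} : downG (upG G j) = G := by
  ext a b
  simp only [downG, SimpleGraph.comap_adj, upG_adj_cast]
  constructor
  · rintro (⟨b₀, hab, hb⟩ | ⟨_, hb⟩)
    · obtain rfl : b₀ = b := Fin.castSucc_injective n hb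
      exact hab
    · exact absurd hb (Fin.castSucc_lt_last b).ne
  · intro h
    exact Or.inl ⟨b, h, rfl⟩

lemma upG_isTree {G : SimpleGraph (Fin n)} {j : Fin n} (hG : G.IsTree) :
    (upG G j).IsTree := by
  constructor
  · -- connected
    let hom : G →g upG G j := ⟨Fin.castSucc, fun h => Or.inl ⟨(Fin.castSucc_injective n).ne h.ne, _, _, h, rfl, rfl⟩⟩
    have reach : ∀ v : Fin (n+1), (upG G j).Reachable v j.castSucc := by
      intro v
      induction v using Fin.lastCases with
      | last => exact (upG_adj_last.mpr rfl).reachable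
      | cast i => exact SimpleGraph.Reachable.map hom (hG.isConnected.preconnected i j)
    constructor
    · intro u v
      exact (reach u).trans (reach v).symm
  · -- acyclic
    intro u c hc
    by_cases hlast : Fin.last n ∈ c.support
    · obtain ⟨a, b, hab, ha, hb⟩ := cycle_two_nbrs c hc hlast
      rw [upG_adj_last] at ha hb
      exact hab (ha.trans hb.symm)
    · have hedges : ∀ e ∈ c.edges, e ∈ (G.map Fin.castSuccEmb).edgeSet := by
        intro e he
        induction e with
        | h x y =>
          have hadj : (upG G j).Adj x y := c.edges_subset_edgeSet he
          rcases hadj with h | h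
          · exact h
          · exfalso
            rw [SimpleGraph.edge_adj] at h
            rcases h.1 with ⟨rfl, _⟩ | ⟨_, rfl⟩
            · exact hlast (c.fst_mem_support_of_mem_edges he)
            · exact hlast (c.snd_mem_support_of_mem_edges he)
      have := hc.transfer hedges
      exact acyclic_map Fin.castSuccEmb hG.IsAcyclic _ this

lemma walk_avoid_pullback {G : SimpleGraph (Fin (n+1))} {u v : Fin (n+1)}
    (p : G.Walk u v) : Fin.last n ∉ p.support → ∀ (a b : Fin n),
    a.castSucc = u → b.castSucc = v → (downG G).Reachable a b := by
  induction p with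
  | nil =>
    intro _ a b ha hb
    obtain rfl : a = b := Fin.castSucc_injective n (ha.trans hb.symm)
    exact SimpleGraph.Reachable.refl a
  | @cons u w v hadj q ih =>
    intro hsup a b ha hb
    rw [SimpleGraph.Walk.support_cons, List.mem_cons] at hsup
    push_neg at hsup
    have hw : w ≠ Fin.last n := by
      intro h
      exact hsup.2 (h ▸ q.start_mem_support)
    obtain ⟨bw, hbw⟩ := Fin.exists_castSucc_eq.mpr hw
    have hadj' : (downG G).Adj a bw := by
      show G.Adj a.castSucc bw.castSucc
      rw [ha, hbw]
      exact hadj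
    exact hadj'.reachable.trans (ih hsup.2 bw b hbw hb)

lemma tree_min_deg {m : ℕ} {G : SimpleGraph (Fin m)} (hG : G.IsTree) (hm : 2 ≤ m)
    (i : Fin m) : 1 ≤ (G.neighborSet i).ncard := by
  have : 1 < Fintype.card (Fin m) := by simp; omega
  obtain ⟨w, hw⟩ := Fintype.exists_ne_of_one_lt_card this i
  obtain ⟨p⟩ := hG.isConnected.preconnected i w
  have hn : ¬ p.Nil := SimpleGraph.Walk.not_nil_of_ne (Ne.symm hw)
  rw [SimpleGraph.Walk.not_nil_iff] at hn
  obtain ⟨y, hadj, q, _⟩ := hn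
  exact (Set.ncard_pos (Set.toFinite _)).mpr ⟨y, hadj⟩

lemma tree_handshake {m : ℕ} {G : SimpleGraph (Fin m)} (hG : G.IsTree) :
    ∑ i, (G.neighborSet i).ncard = 2 * (m - 1) := by
  have h1 : ∀ i, (G.neighborSet i).ncard = G.degree i := by
    intro i
    show (G.neighborSet i).ncard = (G.neighborFinset i).card
    rw [SimpleGraph.neighborFinset_def]
    exact Set.ncard_eq_toFinset_card' _
  rw [Finset.sum_congr rfl (fun i _ => h1 i), SimpleGraph.sum_degrees_eq_twice_card_edges]
  have := hG.card_edgeFinset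
  rw [Fintype.card_fin] at this
  omega

lemma downG_isTree {G : SimpleGraph (Fin (n+1))} (hG : G.IsTree) (hn : 1 ≤ n)
    (hdeg : (G.neighborSet (Fin.last n)).ncard = 1) : (downG G).IsTree := by
  obtain ⟨w, hw⟩ := (Set.ncard_eq_one).mp hdeg
  haveI : Nonempty (Fin n) := ⟨⟨0, hn⟩⟩
  constructor
  · constructor
    intro a b
    obtain ⟨p0⟩ := hG.isConnected.preconnected a.castSucc b.castSucc
    set p := p0.toPath
    have hlast : Fin.last n ∉ (p : G.Walk a.castSucc b.castSucc).support := by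
      intro hmem
      obtain ⟨x, y, hxy, hx, hy⟩ := path_internal_two_nbrs _ p.2 hmem
        (Fin.castSucc_lt_last a).ne' (Fin.castSucc_lt_last b).ne'
      have hx' : x ∈ G.neighborSet (Fin.last n) := hx
      have hy' : y ∈ G.neighborSet (Fin.last n) := hy
      rw [hw] at hx' hy'
      exact hxy (hx'.trans hy'.symm)
    exact walk_avoid_pullback _ hlast a b rfl rfl
  · exact acyclic_comap Fin.castSuccEmb hG.IsAcyclic

lemma eq_upG_of_leaf {G : SimpleGraph (Fin (n+1))} {j : Fin n}
    (hnb : G.neighborSet (Fin.last n) = {j.castSucc}) : upG (downG G) j = G := by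
  have hadjlast : G.Adj (Fin.last n) j.castSucc := by
    have : j.castSucc ∈ G.neighborSet (Fin.last n) := by rw [hnb]; rfl
    exact this
  ext x y
  rw [upG_adj]
  constructor
  · rintro (⟨a, b, hab, ha, hb⟩ | ⟨rfl, rfl⟩ | ⟨rfl, rfl⟩)
    · rw [← ha, ← hb]; exact hab
    · exact hadjlast
    · exact hadjlast.symm
  · intro h
    by_cases hx : x = Fin.last n
    · subst hx
      have : y ∈ G.neighborSet (Fin.last n) := h
      rw [hnb] at this
      exact Or.inr (Or.inl ⟨rfl, this⟩)
    · by_cases hy : y = Fin.last n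
      · subst hy
        have : x ∈ G.neighborSet (Fin.last n) := h.symm
        rw [hnb] at this
        exact Or.inr (Or.inr ⟨rfl, this⟩)
      · obtain ⟨a, ha⟩ := Fin.exists_castSucc_eq.mpr hx
        obtain ⟨b, hb⟩ := Fin.exists_castSucc_eq.mpr hy
        refine Or.inl ⟨a, b, ?_, ha, hb⟩
        show G.Adj a.castSucc b.castSucc
        rw [ha, hb]
        exact h

lemma step_count (hn : 1 ≤ n) (d : Fin (n+1) → ℕ) (hlast : d (Fin.last n) = 1) :
    Fintype.card {T : SimpleGraph (Fin (n+1)) // T.IsTree ∧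
        ∀ i, (T.neighborSet i).ncard = d i}
      = ∑ j : Fin n, Fintype.card {G : SimpleGraph (Fin n) // G.IsTree ∧
          ∀ i, (G.neighborSet i).ncard + (if i = j then 1 else 0) = d i.castSucc} := by
  rw [← Fintype.card_sigma]
  have hmem : ∀ (p : Σ j : Fin n, {G : SimpleGraph (Fin n) // G.IsTree ∧
      ∀ i, (G.neighborSet i).ncard + (if i = j then 1 else 0) = d i.castSucc}),
      (upG p.2.1 p.1).IsTree ∧ ∀ i, ((upG p.2.1 p.1).neighborSet i).ncard = d i := by
    rintro ⟨j, G, hG, hdeg⟩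
    refine ⟨upG_isTree hG, ?_⟩
    intro i
    induction i using Fin.lastCases with
    | last => rw [upG_deg_last, hlast]
    | cast i => rw [upG_deg_cast, hdeg]
  symm
  apply Fintype.card_of_bijective (f := fun p => (⟨upG p.2.1 p.1, hmem p⟩ :
    {T : SimpleGraph (Fin (n+1)) // T.IsTree ∧ ∀ i, (T.neighborSet i).ncard = d i}))
  constructor
  · rintro ⟨j1, G1, h1⟩ ⟨j2, G2, h2⟩ h
    rw [Subtype.mk.injEq] at h
    have hj : j1 = j2 := by
      have h1' := @upG_nbhd_last n G1 j1
      have h2' := @upG_nbhd_last n G2 j2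
      rw [h] at h1'
      rw [h1'] at h2'
      exact Fin.castSucc_injective n (Set.singleton_eq_singleton_iff.mp h2')
    subst hj
    have hG : G1 = G2 := by
      have := congrArg downG h
      rwa [downG_upG, downG_upG] at this
    subst hG
    rfl
  · rintro ⟨T, hT, hdeg⟩
    have hdl : (T.neighborSet (Fin.last n)).ncard = 1 := by rw [hdeg, hlast]
    obtain ⟨w, hw⟩ := Set.ncard_eq_one.mp hdl
    have hwmem : T.Adj (Fin.last n) w := by
      have : w ∈ T.neighborSet (Fin.last n) := by rw [hw]; rfl
      exact this
    have hwne : w ≠ Fin.last n := fun h => T.irrefl (h ▸ hwmem)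
    obtain ⟨j, hj⟩ := Fin.exists_castSucc_eq.mpr hwne
    have hnb : T.neighborSet (Fin.last n) = {j.castSucc} := by rw [hw, hj]
    have hTup : upG (downG T) j = T := eq_upG_of_leaf hnb
    have hdown : (downG T).IsTree := downG_isTree hT hn hdl
    have hdegdown : ∀ i, ((downG T).neighborSet i).ncard + (if i = j then 1 else 0)
        = d i.castSucc := by
      intro i
      have := congrArg (fun (H : SimpleGraph (Fin (n+1))) => (H.neighborSet i.castSucc).ncard) hTup
      rw [upG_deg_cast] at this
      rw [this, hdeg]
    exact ⟨⟨j, ⟨downG T, hdown, hdegdown⟩⟩, Subtype.ext hTup⟩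

lemma comap_isTree {m : ℕ} {σ : Fin m ≃ Fin m} {T : SimpleGraph (Fin m)} (hT : T.IsTree) :
    (T.comap σ).IsTree := by
  haveI : Nonempty (Fin m) := hT.isConnected.nonempty
  constructor
  · constructor
    intro a b
    let ψ : T →g T.comap ⇑σ := ⟨σ.symm, fun {u v} h => by
      show T.Adj (σ (σ.symm u)) (σ (σ.symm v))
      rwa [Equiv.apply_symm_apply, Equiv.apply_symm_apply]⟩
    obtain ⟨p⟩ := hT.isConnected.preconnected (σ a) (σ b)
    exact ⟨(p.map ψ).copy (σ.symm_apply_apply a) (σ.symm_apply_apply b)⟩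
  · intro u c hc
    let χ : T.comap ⇑σ →g T := ⟨σ, fun h => h⟩
    exact hT.IsAcyclic _ (hc.map (f := χ) σ.injective)

lemma comap_deg {m : ℕ} (σ : Fin m ≃ Fin m) (T : SimpleGraph (Fin m)) (i : Fin m) :
    ((T.comap ⇑σ).neighborSet i).ncard = (T.neighborSet (σ i)).ncard := by
  have hset : (T.comap ⇑σ).neighborSet i = ⇑σ ⁻¹' (T.neighborSet (σ i)) := rfl
  rw [hset, ← Equiv.image_symm_eq_preimage, Set.ncard_image_of_injective _ σ.symm.injective]

lemma relabel_card {m : ℕ} (σ : Fin m ≃ Fin m) (d : Fin m → ℕ) :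
    Fintype.card {T : SimpleGraph (Fin m) // T.IsTree ∧
        ∀ i, (T.neighborSet i).ncard = d (σ i)}
      = Fintype.card {T : SimpleGraph (Fin m) // T.IsTree ∧
        ∀ i, (T.neighborSet i).ncard = d i} := by
  apply Fintype.card_congr
  refine ⟨fun T => ⟨T.1.comap σ.symm, comap_isTree T.2.1, ?_⟩,
          fun T => ⟨T.1.comap σ, comap_isTree T.2.1, ?_⟩, ?_, ?_⟩
  · intro i
    rw [comap_deg σ.symm T.1 i]
    have := T.2.2 (σ.symm i)
    rwa [Equiv.apply_symm_apply] at this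
  · intro i
    rw [comap_deg σ T.1 i]
    exact T.2.2 (σ i)
  · rintro ⟨T, h⟩
    apply Subtype.ext
    show (T.comap ⇑σ.symm).comap ⇑σ = T
    rw [SimpleGraph.comap_comap]
    have : ⇑σ.symm ∘ ⇑σ = id := by
      funext x; simp
    rw [this, SimpleGraph.comap_id]
  · rintro ⟨T, h⟩
    apply Subtype.ext
    show (T.comap ⇑σ).comap ⇑σ.symm = T
    rw [SimpleGraph.comap_comap]
    have : ⇑σ ∘ ⇑σ.symm = id := by
      funext x; simp
    rw [this, SimpleGraph.comap_id]

lemma top_fin2_isTree : (⊤ : SimpleGraph (Fin 2)).IsTree := by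
  constructor
  · constructor
    intro a b
    by_cases h : a = b
    · exact h ▸ SimpleGraph.Reachable.refl a
    · exact SimpleGraph.Adj.reachable h
  · intro u c hc
    have h3 := hc.three_le_length
    have hnd : c.support.tail.Nodup := hc.support_nodup
    have hlen : c.support.tail.length = c.length := by
      rw [List.length_tail, SimpleGraph.Walk.length_support]
      omega
    have := List.Nodup.length_le_card hnd
    rw [hlen] at this
    simp only [Fintype.card_fin] at this
    omega

lemma fin2_tree_eq_top {T : SimpleGraph (Fin 2)} (hT : T.IsTree) : T = ⊤ := by
  ext a b
  simp only [SimpleGraph.top_adj]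
  constructor
  · exact fun h => h.ne
  · intro hab
    obtain ⟨p⟩ := hT.isConnected.preconnected a b
    have hn : ¬ p.Nil := SimpleGraph.Walk.not_nil_of_ne hab
    rw [SimpleGraph.Walk.not_nil_iff] at hn
    obtain ⟨y, hadj, q, _⟩ := hn
    have hay : a ≠ y := hadj.ne
    have : y = b := by
      fin_cases a <;> fin_cases b <;> fin_cases y <;> simp_all
    exact this ▸ hadj

lemma top_fin2_deg (i : Fin 2) : ((⊤ : SimpleGraph (Fin 2)).neighborSet i).ncard = 1 := by
  have : (⊤ : SimpleGraph (Fin 2)).neighborSet i = {1 - i} := by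
    ext x
    simp only [SimpleGraph.mem_neighborSet, SimpleGraph.top_adj, Set.mem_singleton_iff]
    fin_cases i <;> fin_cases x <;> simp <;> decide
  rw [this, Set.ncard_singleton]

lemma tree_card : ∀ (m : ℕ), 2 ≤ m → ∀ (d : Fin m → ℕ), (∀ i, 1 ≤ d i) →
    (∑ i, d i = 2 * (m - 1)) →
    Fintype.card {T : SimpleGraph (Fin m) // T.IsTree ∧ ∀ i, (T.neighborSet i).ncard = d i}
      * ∏ i, (d i - 1).factorial = (m - 2).factorial := by
  refine Nat.le_induction ?_ ?_
  · intro d h1 hs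
    have h10 := h1 0
    have h11 := h1 1
    rw [Fin.sum_univ_two] at hs
    have hd0 : d 0 = 1 := by omega
    have hd1 : d 1 = 1 := by omega
    have hdall : ∀ i : Fin 2, d i = 1 := by
      intro i; fin_cases i <;> assumption
    have hcard : Fintype.card {T : SimpleGraph (Fin 2) // T.IsTree ∧
        ∀ i, (T.neighborSet i).ncard = d i} = 1 := by
      rw [Fintype.card_eq_one_iff]
      refine ⟨⟨⊤, top_fin2_isTree, fun i => by rw [top_fin2_deg, hdall]⟩, ?_⟩
      rintro ⟨T, hT, _⟩
      exact Subtype.ext (fin2_tree_eq_top hT)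
    rw [hcard, one_mul]
    have hp : ∏ i, (d i - 1).factorial = 1 :=
      Finset.prod_eq_one (fun i _ => by rw [hdall, Nat.sub_self, Nat.factorial_zero])
    rw [hp]
    rfl
  · intro m hm ih d h1 hs
    have hex : ∃ i₀ : Fin (m+1), d i₀ = 1 := by
      by_contra h
      push_neg at h
      have h2 : ∀ i, 2 ≤ d i := fun i => by have := h1 i; have := h i; omega
      have hle : ∑ _i : Fin (m+1), 2 ≤ ∑ i, d i := Finset.sum_le_sum (fun i _ => h2 i)
      rw [Finset.sum_const, Finset.card_univ, Fintype.card_fin, smul_eq_mul] at hle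
      omega
    obtain ⟨i₀, hi₀⟩ := hex
    set σ : Fin (m+1) ≃ Fin (m+1) := Equiv.swap i₀ (Fin.last m) with hσ
    set d' : Fin (m+1) → ℕ := fun i => d (σ i) with hd'
    have hlast : d' (Fin.last m) = 1 := by
      rw [hd']
      simp only [hσ, Equiv.swap_apply_right]
      exact hi₀
    have h1' : ∀ i, 1 ≤ d' i := fun i => h1 _
    have hs' : ∑ i, d' i = 2 * m := by
      rw [hd', Equiv.sum_comp σ d, hs]
      simp
    have hcast_sum : ∑ i : Fin m, d' i.castSucc = 2 * m - 1 := by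
      rw [Fin.sum_univ_castSucc] at hs'
      omega
    have hcard : Fintype.card {T : SimpleGraph (Fin (m+1)) // T.IsTree ∧
          ∀ i, (T.neighborSet i).ncard = d i}
        = Fintype.card {T : SimpleGraph (Fin (m+1)) // T.IsTree ∧
          ∀ i, (T.neighborSet i).ncard = d' i} := (relabel_card σ d).symm
    have hprod : ∏ i, (d i - 1).factorial = ∏ i, (d' i - 1).factorial := by
      rw [hd', ← Equiv.prod_comp σ (fun i => (d i - 1).factorial)]
    rw [hcard, hprod, step_count (by omega) d' hlast]
    have hprodsplit : ∏ i, (d' i - 1).factorial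
        = ∏ i : Fin m, (d' i.castSucc - 1).factorial := by
      rw [Fin.prod_univ_castSucc, hlast]
      simp
    rw [hprodsplit, Finset.sum_mul]
    have hterm : ∀ j : Fin m,
        Fintype.card {G : SimpleGraph (Fin m) // G.IsTree ∧
            ∀ i, (G.neighborSet i).ncard + (if i = j then 1 else 0) = d' i.castSucc}
          * ∏ i : Fin m, (d' i.castSucc - 1).factorial
        = (d' j.castSucc - 1) * (m - 2).factorial := by
      intro j
      set e : Fin m → ℕ := fun i => d' i.castSucc - (if i = j then 1 else 0) with he
      have heq : ∀ i, e i = d' i.castSucc - (if i = j then 1 else 0) := fun i => rfl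
      have hcondequiv : Fintype.card {G : SimpleGraph (Fin m) // G.IsTree ∧
            ∀ i, (G.neighborSet i).ncard + (if i = j then 1 else 0) = d' i.castSucc}
          = Fintype.card {G : SimpleGraph (Fin m) // G.IsTree ∧
            ∀ i, (G.neighborSet i).ncard = e i} := by
        apply Fintype.card_congr
        apply Equiv.subtypeEquivRight
        intro G
        apply and_congr_right
        intro _
        apply forall_congr'
        intro i
        have hd1 := h1' i.castSucc
        rw [heq i]
        split_ifs <;> omega
      rw [hcondequiv]
      by_cases hge : 2 ≤ d' j.castSucc
      · have he1 : ∀ i, 1 ≤ e i := by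
          intro i
          rw [heq i]
          split_ifs with hij
          · subst hij; omega
          · have := h1' i.castSucc; omega
        have hesum : ∑ i, e i = 2 * (m - 1) := by
          have : ∀ i, e i + (if i = j then 1 else 0) = d' i.castSucc := by
            intro i
            have := h1' i.castSucc
            rw [heq i]
            split_ifs <;> omega
          have hsum2 : ∑ i, (e i + (if i = j then 1 else 0)) = ∑ i : Fin m, d' i.castSucc :=
            Finset.sum_congr rfl (fun i _ => this i)
          rw [Finset.sum_add_distrib, Finset.sum_ite_eq' univ j (fun _ => 1)] at hsum2
          simp only [Finset.mem_univ, if_true] at hsum2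
          omega
        have hIH := ih e he1 hesum
        have hsplit : ∏ i : Fin m, (d' i.castSucc - 1).factorial
            = (d' j.castSucc - 1) * ∏ i : Fin m, (e i - 1).factorial := by
          rw [← Finset.prod_erase_mul univ _ (Finset.mem_univ j),
              ← Finset.prod_erase_mul univ _ (Finset.mem_univ j)]
          have herase : ∏ i ∈ univ.erase j, (d' i.castSucc - 1).factorial
              = ∏ i ∈ univ.erase j, (e i - 1).factorial := by
            apply Finset.prod_congr rfl
            intro i hi
            rw [heq i, if_neg (Finset.ne_of_mem_erase hi), Nat.sub_zero]
          rw [herase]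
          have hej : e j = d' j.castSucc - 1 := by rw [heq j, if_pos rfl]
          have hfact : (d' j.castSucc - 1).factorial
              = (d' j.castSucc - 1) * (e j - 1).factorial := by
            have h2 : e j - 1 = d' j.castSucc - 1 - 1 := by rw [hej]
            rw [h2]
            obtain ⟨t, ht⟩ : ∃ t, d' j.castSucc - 1 = t + 1 := ⟨d' j.castSucc - 2, by omega⟩
            rw [ht, Nat.factorial_succ, Nat.add_sub_cancel]
          rw [hfact]
          ring
        rw [hsplit, ← Nat.mul_assoc, Nat.mul_comm _ (d' j.castSucc - 1), Nat.mul_assoc, hIH]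
      · have hdj : d' j.castSucc = 1 := by
          have := h1' j.castSucc
          omega
        have hcard0 : Fintype.card {G : SimpleGraph (Fin m) // G.IsTree ∧
            ∀ i, (G.neighborSet i).ncard = e i} = 0 := by
          rw [Fintype.card_eq_zero_iff]
          constructor
          rintro ⟨G, hG, hdeg⟩
          have := tree_min_deg hG hm j
          rw [hdeg j, heq j, if_pos rfl, hdj] at this
          omega
        rw [hcard0, Nat.zero_mul, hdj]
        simp
    rw [Finset.sum_congr rfl (fun j _ => hterm j)]
    rw [← Finset.sum_mul]
    have hsumdeg : ∑ j : Fin m, (d' j.castSucc - 1) = m - 1 := by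
      have : ∑ j : Fin m, ((d' j.castSucc - 1) + 1) = ∑ j : Fin m, d' j.castSucc :=
        Finset.sum_congr rfl (fun j _ => by have := h1' j.castSucc; omega)
      rw [Finset.sum_add_distrib, Finset.sum_const, Finset.card_univ, Fintype.card_fin,
        smul_eq_mul, Nat.mul_one, hcast_sum] at this
      omega
    rw [hsumdeg, show (m + 1 - 2) = (m - 2) + 1 from by omega, Nat.factorial_succ,
      show m - 1 = (m - 2) + 1 from by omega]

set_option maxHeartbeats 1600000 in
lemma treesum (n k : ℕ) (hn : 2 ≤ n) (hk : 1 ≤ k) (hkn : k ≤ n) (c : Fin k ↪ Fin n) :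
    ∑ T : {G : SimpleGraph (Fin n) // G.IsTree}, ∏ i : Fin n,
      (((T.1.neighborSet i).ncard + (if ∃ j, c j = i then 1 else 0) - 1).factorial : ℚ)
      = ((n-2).factorial : ℚ) * (((2*n + k - 3).choose (n-2) : ℕ) : ℚ) := by
  classical
  set D := Fintype.piFinset (fun _ : Fin n => Finset.range (2*n)) with hD
  set w : (Fin n → ℕ) → ℚ := fun d => ∏ i : Fin n,
    (((d i + (if ∃ j, c j = i then 1 else 0) - 1).factorial : ℕ) : ℚ) with hw
  set dv : {G : SimpleGraph (Fin n) // G.IsTree} → (Fin n → ℕ) :=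
    fun T => fun i => (T.1.neighborSet i).ncard with hdv
  set N : (Fin n → ℕ) → ℕ := fun d => Fintype.card {T : SimpleGraph (Fin n) // T.IsTree ∧
    ∀ i, (T.neighborSet i).ncard = d i} with hN
  have hmaps : ∀ T ∈ (Finset.univ : Finset {G : SimpleGraph (Fin n) // G.IsTree}),
      dv T ∈ D := by
    intro T _
    rw [hD, Fintype.mem_piFinset]
    intro i
    rw [Finset.mem_range]
    have hsum := tree_handshake T.2
    have hle : (T.1.neighborSet i).ncard ≤ ∑ i', (T.1.neighborSet i').ncard :=
      Finset.single_le_sum (f := fun i' => (T.1.neighborSet i').ncard)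
        (fun _ _ => Nat.zero_le _) (Finset.mem_univ i)
    rw [hsum] at hle
    have : dv T i = (T.1.neighborSet i).ncard := rfl
    omega
  have hfib := Finset.sum_fiberwise_of_maps_to hmaps (fun T => w (dv T))
  have hstart : ∑ T : {G : SimpleGraph (Fin n) // G.IsTree}, ∏ i : Fin n,
      (((T.1.neighborSet i).ncard + (if ∃ j, c j = i then 1 else 0) - 1).factorial : ℚ)
      = ∑ d ∈ D, ∑ T ∈ Finset.univ.filter (fun T => dv T = d), w (dv T) := by
    rw [hfib]
  rw [hstart]
  have hinner : ∀ d ∈ D, ∑ T ∈ Finset.univ.filter (fun T => dv T = d), w (dv T)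
      = (N d : ℚ) * w d := by
    intro d _
    have h1 : ∀ T ∈ Finset.univ.filter (fun T => dv T = d), w (dv T) = w d := by
      intro T hT
      rw [Finset.mem_filter] at hT
      rw [hT.2]
    rw [Finset.sum_congr rfl h1, Finset.sum_const, nsmul_eq_mul]
    congr 2
    rw [hN]
    have h2 : (Finset.univ.filter (fun T : {G : SimpleGraph (Fin n) // G.IsTree} =>
        dv T = d)).card = Fintype.card {T : {G : SimpleGraph (Fin n) // G.IsTree} //
        dv T = d} := (Fintype.card_subtype _).symm
    rw [h2]
    apply Fintype.card_congr
    refine ⟨fun T => ⟨T.1.1, T.1.2, fun i => by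
        have := congrFun T.2 i
        exact this⟩,
      fun T => ⟨⟨T.1, T.2.1⟩, funext (fun i => T.2.2 i)⟩, ?_, ?_⟩
    · rintro ⟨⟨T, hT⟩, hd⟩; rfl
    · rintro ⟨T, hT, hd⟩; rfl
  rw [Finset.sum_congr rfl hinner]
  set Feas : (Fin n → ℕ) → Prop := fun d => (∀ i, 1 ≤ d i) ∧ ∑ i, d i = 2*(n-1) with hFeas
  have hcase : ∀ d ∈ D, (N d : ℚ) * w d = if Feas d
      then ((n-2).factorial : ℚ) * ∏ i : Fin n, (if ∃ j, c j = i then (d i : ℚ) else 1)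
      else 0 := by
    intro d _
    by_cases hf : Feas d
    · rw [if_pos hf]
      obtain ⟨hf1, hf2⟩ := hf
      have hwsplit : w d = (∏ i : Fin n, (((d i - 1).factorial : ℕ) : ℚ)) *
          ∏ i : Fin n, (if ∃ j, c j = i then (d i : ℚ) else 1) := by
        rw [hw, ← Finset.prod_mul_distrib]
        apply Finset.prod_congr rfl
        intro i _
        have hd1 := hf1 i
        by_cases hmem : ∃ j, c j = i
        · rw [if_pos hmem, if_pos hmem]
          have : d i + 1 - 1 = (d i - 1) + 1 := by omega
          rw [this, Nat.factorial_succ]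
          push_cast
          have : ((d i - 1 : ℕ) : ℚ) + 1 = (d i : ℚ) := by
            have : (d i - 1) + 1 = d i := by omega
            rw [← this]
            push_cast
            ring
          rw [this]
          ring
        · rw [if_neg hmem, if_neg hmem]
          simp
      rw [hwsplit, ← mul_assoc]
      congr 1
      have htc := tree_card n hn d hf1 hf2
      have : (N d : ℚ) * ∏ i : Fin n, (((d i - 1).factorial : ℕ) : ℚ)
          = ((N d * ∏ i : Fin n, (d i - 1).factorial : ℕ) : ℚ) := by
        push_cast
        ring
      rw [this, htc]
    · rw [if_neg hf]
      have hN0 : N d = 0 := by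
        rw [hN, Fintype.card_eq_zero_iff]
        constructor
        rintro ⟨T, hT, hdeg⟩
        apply hf
        constructor
        · intro i
          rw [← hdeg i]
          exact tree_min_deg hT hn i
        · rw [← tree_handshake hT]
          exact (Finset.sum_congr rfl (fun i _ => (hdeg i).symm))
      rw [hN0]
      push_cast
      ring
  rw [Finset.sum_congr rfl hcase, ← Finset.sum_filter]
  have hbij : ∑ d ∈ D.filter Feas,
      ((n-2).factorial : ℚ) * ∏ i : Fin n, (if ∃ j, c j = i then (d i : ℚ) else 1)
      = ∑ e ∈ Finset.Nat.antidiagonalTuple n (n-2),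
      ((n-2).factorial : ℚ) * ∏ i : Fin n, (if ∃ j, c j = i then ((e i : ℚ) + 1) else 1) := by
    apply Finset.sum_nbij' (i := fun d => fun i => d i - 1) (j := fun e => fun i => e i + 1)
    · intro d hd
      rw [Finset.mem_filter] at hd
      obtain ⟨_, hf1, hf2⟩ := hd
      rw [Finset.Nat.mem_antidiagonalTuple]
      have : ∑ i : Fin n, ((d i - 1) + 1) = ∑ i, d i :=
        Finset.sum_congr rfl (fun i _ => by have := hf1 i; omega)
      rw [Finset.sum_add_distrib, Finset.sum_const, Finset.card_univ, Fintype.card_fin,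
        smul_eq_mul, Nat.mul_one] at this
      omega
    · intro e he
      rw [Finset.Nat.mem_antidiagonalTuple] at he
      rw [Finset.mem_filter]
      have hei : ∀ i, e i ≤ n - 2 := by
        intro i
        have : e i ≤ ∑ i', e i' :=
          Finset.single_le_sum (fun _ _ => Nat.zero_le _) (Finset.mem_univ i)
        omega
      refine ⟨?_, fun i => Nat.le_add_left 1 (e i), ?_⟩
      · rw [hD, Fintype.mem_piFinset]
        intro i
        rw [Finset.mem_range]
        have := hei i
        omega
      · have : ∑ i : Fin n, (e i + 1) = (∑ i, e i) + n := by
          rw [Finset.sum_add_distrib, Finset.sum_const, Finset.card_univ, Fintype.card_fin,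
            smul_eq_mul, Nat.mul_one]
        rw [this, he]
        omega
    · intro d hd
      rw [Finset.mem_filter] at hd
      funext i
      show (d i - 1) + 1 = d i
      have := hd.2.1 i
      omega
    · intro e _
      funext i
      show (e i + 1) - 1 = e i
      omega
    · intro d hd
      rw [Finset.mem_filter] at hd
      congr 1
      apply Finset.prod_congr rfl
      intro i _
      have h1 := hd.2.1 i
      by_cases hmem : ∃ j, c j = i
      · rw [if_pos hmem, if_pos hmem]
        have : ((d i - 1 : ℕ) : ℚ) + 1 = (d i : ℚ) := by
          have h2 : (d i - 1) + 1 = d i := by omega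
          rw [← h2]
          push_cast
          ring
        rw [this]
      · rw [if_neg hmem, if_neg hmem]
  rw [hbij, ← Finset.mul_sum]
  apply congrArg
  have hts := tupleSum n (by omega) (n-2) (fun i => ∃ j, c j = i)
    (fun i => (inferInstance : Decidable (∃ j, c j = i)))
  have hKcard : (Finset.univ.filter (fun i : Fin n => ∃ j, c j = i)).card = k := by
    have himg : Finset.univ.filter (fun i : Fin n => ∃ j, c j = i)
        = Finset.univ.image c := by
      ext i
      simp only [Finset.mem_filter, Finset.mem_univ, true_and, Finset.mem_image]
    rw [himg, Finset.card_image_of_injective _ c.injective, Finset.card_univ,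
      Fintype.card_fin]
  have hcast : ∑ e ∈ Finset.Nat.antidiagonalTuple n (n-2),
      ∏ i : Fin n, (if ∃ j, c j = i then ((e i : ℚ) + 1) else 1)
      = ((∑ e ∈ Finset.Nat.antidiagonalTuple n (n-2),
        ∏ i : Fin n, (if ∃ j, c j = i then e i + 1 else 1) : ℕ) : ℚ) := by
    push_cast
    apply Finset.sum_congr rfl
    intro e _
    apply Finset.prod_congr rfl
    intro i _
    split_ifs <;> simp
  refine hcast.trans ?_
  rw [hts]
  have harg : (n - 2) + n +
      (Finset.univ.filter (fun i : Fin n => ∃ j, c j = i)).card - 1 = 2*n + k - 3 := by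
    rw [hKcard]
    clear hts hcast hbij hcase hinner hstart hfib hmaps
    omega
  rw [harg]

theorem ciliated_tree_count (n k : ℕ) (hk : 1 ≤ k) (hkn : k ≤ n) (hn : 2 ≤ n) :
    (1 / (n.factorial : ℚ)) *
        ∑ T : {G : SimpleGraph (Fin n) // G.IsTree},
          ∑ c : Fin k ↪ Fin n,
            ∏ i : Fin n,
              (((T.1.neighborSet i).ncard +
                  (if ∃ j, c j = i then 1 else 0) - 1).factorial : ℚ)
      = ((n - 2).factorial : ℚ) / ((n - k).factorial : ℚ) *
          ((2 * n + k - 3).choose (n - 2) : ℚ) := by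
  rw [Finset.sum_comm]
  rw [Finset.sum_congr rfl (fun c _ => treesum n k hn hk hkn c), Finset.sum_const,
    Finset.card_univ, Fintype.card_embedding_eq, Fintype.card_fin, Fintype.card_fin,
    nsmul_eq_mul]
  have hdesc : ((n - k).factorial : ℚ) * (n.descFactorial k : ℚ) = (n.factorial : ℚ) := by
    rw [← Nat.cast_mul, Nat.factorial_mul_descFactorial hkn]
  have h1 : (n.factorial : ℚ) ≠ 0 := Nat.cast_ne_zero.mpr (Nat.factorial_ne_zero n)
  have h2 : ((n - k).factorial : ℚ) ≠ 0 := Nat.cast_ne_zero.mpr (Nat.factorial_ne_zero _)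
  field_simp
  linear_combination ((((2 * n + k - 3).choose (n - 2) : ℕ) : ℚ)) * hdesc
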